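/- For all integers m ≥ 0 and 1 ≤ r ≤ m, the derivative of the Chebyshev polynomial of the second kind satisfies U_m'(cos(rπ/(m+1))) = (m+1)·(-1)^{r+1} / sin²(rπ/(m+1)). -/
import Mathlib

open Real Polynomial Polynomial.Chebyshev

theorem chebyshevU_deriv_at_roots (m r : ℕ) (hr1 : 1 ≤ r) (hrm : r ≤ m) :
    (Polynomial.derivative (Chebyshev.U ℝ (m : ℤ))).eval (Real.cos (r * π / (m + 1))) =
      (m + 1) * (-1) ^ (r + 1) / (Real.sin (r * π / (m + 1))) ^ 2 := by
  set θ : ℝ := r * π / (m + 1) with hθ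
  have hm1 : (m : ℝ) + 1 ≠ 0 := by positivity
  have hmul : ((m : ℝ) + 1) * θ = r * π := by
    rw [hθ]; field_simp
  have hsin : Real.sin θ > 0 := by
    apply Real.sin_pos_of_pos_of_lt_pi
    · have : (0:ℝ) < r := by exact_mod_cast hr1
      rw [hθ]; positivity
    · rw [hθ, div_lt_iff₀ (by positivity)]
      have : (r : ℝ) < m + 1 := by exact_mod_cast Nat.lt_succ_of_le hrm
      nlinarith [Real.pi_pos]
  have hcosr : Real.cos ((r : ℝ) * π) = (-1) ^ r := by
    have := Real.cos_nat_mul_pi_sub 0 r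
    simpa using this
  have hT : (Chebyshev.T ℝ ((m : ℤ) + 1)).eval (Real.cos θ) = (-1) ^ r := by
    rw [Polynomial.Chebyshev.T_real_cos]
    rw [show (((m : ℤ) + 1 : ℤ) : ℝ) = (m : ℝ) + 1 by push_cast; ring, hmul, hcosr]
  have hU : (Chebyshev.U ℝ (m : ℤ)).eval (Real.cos θ) = 0 := by
    have h := Polynomial.Chebyshev.U_real_cos θ (m : ℤ)
    rw [show (((m : ℤ) : ℝ) + 1) = (m : ℝ) + 1 by push_cast; ring, hmul] at h
    have : Real.sin ((r : ℝ) * π) = 0 := Real.sin_nat_mul_pi r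
    rw [this] at h
    exact (mul_eq_zero.mp h).resolve_right (ne_of_gt hsin)
  have key := congrArg (Polynomial.eval (Real.cos θ))
    (Polynomial.Chebyshev.add_one_mul_T_eq_poly_in_U (R := ℝ) (m : ℤ))
  simp only [Polynomial.eval_mul, Polynomial.eval_add, Polynomial.eval_sub, Polynomial.eval_one,
    Polynomial.eval_X, Polynomial.eval_pow, Polynomial.eval_intCast, hT, hU] at key
  have hsq : 1 - Real.cos θ ^ 2 = Real.sin θ ^ 2 := by
    have := Real.sin_sq_add_cos_sq θ; linarith
  rw [hsq] at key
  have hs2 : Real.sin θ ^ 2 ≠ 0 := by positivity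
  rw [eq_div_iff hs2]
  push_cast at key
  have : (-1:ℝ) ^ (r + 1) = -(-1) ^ r := by rw [pow_succ]; ring
  rw [this]
  nlinarith [key]
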